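/- For any integers k ≥ 1 and d ≥ 1 and any set of (k−1)(d+1)+1 points in ℝ^d, there is a partition of the set into k nonempty subsets P_1, …, P_k such that the convex hulls of P_1, …, P_k have a common point. -/

import Mathlib

open scoped Classical

section TverbergAux

open scoped RealInnerProductSpace
open Finset Module


variable {E : Type*} [NormedAddCommGroup E] [InnerProductSpace ℝ E] [FiniteDimensional ℝ E]

/-- From a finite set whose hull contains 0, pick a point with nonpositive inner product
against any given vector. -/
lemma tv_exists_inner_nonpos {S : Finset E} (hS : (0:E) ∈ convexHull ℝ (S : Set E)) (p : E) :
    ∃ y ∈ S, ⟪y, p⟫ ≤ 0 := by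
  classical
  rw [Finset.convexHull_eq] at hS
  obtain ⟨w, hw0, hw1, hcm⟩ := hS
  by_contra h
  push_neg at h
  have h0 : ∑ y ∈ S, w y • y = (0:E) := by
    rw [← Finset.centerMass_eq_of_sum_1 _ _ hw1] ; exact hcm
  have hsum : ∑ y ∈ S, w y * ⟪y, p⟫ = 0 := by
    have := congrArg (fun z => ⟪z, p⟫) h0
    simpa [sum_inner, real_inner_smul_left] using this
  have hpos : 0 < ∑ y ∈ S, w y * ⟪y, p⟫ := by
    have hne : S.Nonempty := by
      by_contra hne
      rw [Finset.not_nonempty_iff_eq_empty] at hne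
      simp [hne] at hw1
    obtain ⟨y0, hy0⟩ := hne
    -- some weight is positive
    obtain ⟨y1, hy1, hy1pos⟩ : ∃ y ∈ S, 0 < w y := by
      by_contra hc
      push_neg at hc
      have : ∑ y ∈ S, w y = 0 := le_antisymm (Finset.sum_nonpos hc) (Finset.sum_nonneg hw0)
      rw [hw1] at this; norm_num at this
    refine Finset.sum_pos' (fun y hy => mul_nonneg (hw0 y hy) (le_of_lt (h y hy))) ⟨y1, hy1, ?_⟩
    exact mul_pos hy1pos (h y1 hy1)
  rw [hsum] at hpos; exact lt_irrefl 0 hpos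

/-- An affinely independent finset contained in the hyperplane `⟪·,p⟫ = ‖p‖²` (`p ≠ 0`)
has at most `finrank ℝ E` elements. -/
lemma tv_card_le_of_hyperplane {p : E} (hp : p ≠ 0) (t : Finset E)
    (ht : ∀ y ∈ t, ⟪y, p⟫ = ‖p‖^2)
    (hai : AffineIndependent ℝ ((↑) : t → E)) : t.card ≤ finrank ℝ E := by
  classical
  set f : E →ₗ[ℝ] ℝ := (innerSL ℝ p : E →L[ℝ] ℝ).toLinearMap with hf
  have hker : vectorSpan ℝ (t : Set E) ≤ LinearMap.ker f := by
    rw [vectorSpan_def, Submodule.span_le]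
    rintro v ⟨y, hy, z, hz, rfl⟩
    simp only [SetLike.mem_coe, LinearMap.mem_ker, hf, ContinuousLinearMap.coe_coe, innerSL_apply_apply,
      vsub_eq_sub, inner_sub_right]
    rw [real_inner_comm y p, real_inner_comm z p, ht y hy, ht z hz, sub_self]
  have hrange : LinearMap.range f = ⊤ := by
    rw [LinearMap.range_eq_top]
    intro r
    refine ⟨(r / ‖p‖^2) • p, ?_⟩
    have hp2 : ‖p‖^2 ≠ 0 := by
      have : 0 < ‖p‖ := norm_pos_iff.mpr hp
      positivity
    simp [hf, real_inner_smul_right, real_inner_self_eq_norm_sq]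
    field_simp
  have hkerrank : finrank ℝ (LinearMap.ker f) + 1 = finrank ℝ E := by
    have := LinearMap.finrank_range_add_finrank_ker f
    rw [hrange] at this
    simpa [add_comm] using this
  have h1 : t.card ≤ finrank ℝ (vectorSpan ℝ (Set.range ((↑) : t → E))) + 1 := by
    simpa [Fintype.card_coe] using hai.card_le_finrank_succ
  have h2 : finrank ℝ (vectorSpan ℝ (Set.range ((↑) : t → E))) ≤ finrank ℝ (LinearMap.ker f) := by
    apply Submodule.finrank_mono
    rw [Subtype.range_coe]
    exact hker
  omega

/-- **Colorful Carathéodory theorem** (Bárány), specialised to the origin. -/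
lemma tv_colorful_caratheodory {ι : Type*} [Fintype ι]
    (hcard : finrank ℝ E < Fintype.card ι)
    (S : ι → Finset E) (hS : ∀ i, (0:E) ∈ convexHull ℝ ((S i : Set E))) :
    ∃ x : ι → E, (∀ i, x i ∈ S i) ∧ (0:E) ∈ convexHull ℝ (Set.range x) := by
  classical
  have hne : ∀ i, (S i).Nonempty := by
    intro i
    rcases Finset.eq_empty_or_nonempty (S i) with h | h
    · have := hS i; rw [h] at this; simp at this
    · exact h
  haveI : Nonempty ι := Fintype.card_pos_iff.mp (by omega)
  let Sel := ∀ i, {y // y ∈ S i}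
  haveI : Nonempty Sel := ⟨fun i => ⟨(hne i).choose, (hne i).choose_spec⟩⟩
  let f : Sel → ι → E := fun x i => (x i : E)
  let K : Sel → Set E := fun x => convexHull ℝ (Set.range (f x))
  have hKconv : ∀ x, Convex ℝ (K x) := fun x => convex_convexHull ℝ _
  have hKcompact : ∀ x, IsCompact (K x) := fun x =>
    (Set.finite_range (f x)).isCompact_convexHull ℝ
  have hmem : ∀ x i, f x i ∈ K x := fun x i => subset_convexHull ℝ _ ⟨i, rfl⟩
  have hKne : ∀ x, (K x).Nonempty := fun x => ⟨f x (Classical.arbitrary ι), hmem _ _⟩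
  have hex : ∀ x : Sel, ∃ v ∈ K x, ‖(0:E) - v‖ = ⨅ w : K x, ‖(0:E) - w‖ := fun x =>
    exists_norm_eq_iInf_of_complete_convex (hKne x)
      ((hKcompact x).isClosed.isComplete) (hKconv x) 0
  choose np hnpK hnp using hex
  obtain ⟨x₀, hx₀⟩ := Finite.exists_min (fun x : Sel => ‖np x‖)
  set p := np x₀ with hpdef
  by_cases hp0 : p = 0
  · exact ⟨f x₀, fun i => (x₀ i).2, hp0 ▸ hnpK x₀⟩
  exfalso
  -- variational inequality
  have hge : ∀ w ∈ K x₀, ‖p‖^2 ≤ ⟪w, p⟫ := by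
    intro w hw
    have h := (norm_eq_iInf_iff_real_inner_le_zero (hKconv x₀) (hnpK x₀)).mp (hnp x₀) w hw
    rw [zero_sub, inner_sub_right, inner_neg_left, inner_neg_left, ← hpdef] at h
    have hpp : ⟪p, p⟫ = ‖p‖^2 := real_inner_self_eq_norm_sq p
    have hcomm : ⟪p, w⟫ = ⟪w, p⟫ := real_inner_comm w p
    linarith
  -- representation of p as convex combination
  have hrep : ∃ (s : Finset ι) (w : ι → ℝ), (∀ i ∈ s, 0 ≤ w i) ∧ s.sum w = 1 ∧
      s.affineCombination ℝ (f x₀) w = p := by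
    have := hnpK x₀
    rw [show K x₀ = _ from convexHull_range_eq_exists_affineCombination (f x₀)] at this
    exact this
  obtain ⟨s, w, hw0, hw1, haff⟩ := hrep
  have hplin : ∑ i ∈ s, w i • f x₀ i = p := by
    rw [← Finset.affineCombination_eq_linear_combination s (f x₀) w hw1]; exact haff
  set J := s.filter (fun i => w i ≠ 0) with hJdef
  have hJsum : ∑ i ∈ J, w i = 1 := by
    rw [hJdef, Finset.sum_filter_ne_zero, hw1]
  have hJlin : ∑ i ∈ J, w i • f x₀ i = p := by
    rw [hJdef, Finset.sum_filter_of_ne, hplin]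
    intro i _ h hwi
    exact h (by rw [hwi, zero_smul])
  have hJ0 : ∀ i ∈ J, 0 < w i := by
    intro i hi
    rw [hJdef, Finset.mem_filter] at hi
    exact lt_of_le_of_ne (hw0 i hi.1) (Ne.symm hi.2)
  have hface : ∀ i ∈ J, ⟪f x₀ i, p⟫ = ‖p‖^2 := by
    intro i hi
    by_contra hne'
    have hgt : ‖p‖^2 < ⟪f x₀ i, p⟫ :=
      lt_of_le_of_ne (hge _ (hmem x₀ i)) (Ne.symm hne')
    have hlt : ∑ j ∈ J, w j * ‖p‖^2 < ∑ j ∈ J, w j * ⟪f x₀ j, p⟫ := by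
      refine Finset.sum_lt_sum (fun j hj => ?_) ⟨i, hi, ?_⟩
      · exact mul_le_mul_of_nonneg_left (hge _ (hmem x₀ j)) (hJ0 j hj).le
      · exact mul_lt_mul_of_pos_left hgt (hJ0 i hi)
    have hL : ∑ j ∈ J, w j * ‖p‖^2 = ‖p‖^2 := by
      rw [← Finset.sum_mul, hJsum, one_mul]
    have hR : ∑ j ∈ J, w j * ⟪f x₀ j, p⟫ = ‖p‖^2 := by
      have := congrArg (fun z => ⟪z, p⟫) hJlin
      simpa [sum_inner, real_inner_smul_left, real_inner_self_eq_norm_sq] using this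
    rw [hL, hR] at hlt
    exact lt_irrefl _ hlt
  -- p lies in the hull of the face points
  set A := J.image (f x₀) with hAdef
  have hpA : p ∈ convexHull ℝ (A : Set E) := by
    have hcm : J.centerMass w (f x₀) = p := by
      rw [Finset.centerMass_eq_of_sum_1 _ _ hJsum, hJlin]
    rw [← hcm]
    exact Finset.centerMass_mem_convexHull J (fun i hi => (hJ0 i hi).le)
      (by rw [hJsum]; norm_num)
      (fun i hi => Finset.mem_coe.2 (Finset.mem_image_of_mem _ hi))
  rw [convexHull_eq_union] at hpA
  simp only [Set.mem_iUnion] at hpA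
  obtain ⟨t, hts, hai, hpt⟩ := hpA
  have htH : ∀ y ∈ t, ⟪y, p⟫ = ‖p‖^2 := by
    intro y hy
    have : y ∈ A := hts hy
    obtain ⟨i, hi, rfl⟩ := Finset.mem_image.mp this
    exact hface i hi
  have hcardt : t.card ≤ finrank ℝ E := tv_card_le_of_hyperplane hp0 t htH hai
  -- find an unused color
  let pick : E → ι := fun y => if h : ∃ i, f x₀ i = y then h.choose else Classical.arbitrary ι
  have hpick : ∀ y, (∃ i, f x₀ i = y) → f x₀ (pick y) = y := by
    intro y h
    simp only [pick, dif_pos h]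
    exact h.choose_spec
  set Used := t.image pick with hUdef
  obtain ⟨i₀, hi₀⟩ : ∃ i₀, i₀ ∉ Used := by
    by_contra hI
    push_neg at hI
    have h1 : (Finset.univ : Finset ι) ⊆ Used := fun i _ => hI i
    have h2 := Finset.card_le_card h1
    have h3 : Used.card ≤ t.card := Finset.card_image_le
    rw [Finset.card_univ] at h2
    omega
  obtain ⟨y', hy'S, hy'⟩ := tv_exists_inner_nonpos (hS i₀) p
  set x' : Sel := Function.update x₀ i₀ ⟨y', hy'S⟩ with hx'def
  have hfx' : ∀ i, i ≠ i₀ → f x' i = f x₀ i := by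
    intro i hi
    simp only [f, hx'def, Function.update_of_ne hi]
  have hfi₀ : f x' i₀ = y' := by
    simp only [f, hx'def, Function.update_self]
  have htsub : (t : Set E) ⊆ Set.range (f x') := by
    intro y hy
    have hyA : y ∈ A := hts hy
    obtain ⟨i, hiJ, hif⟩ := Finset.mem_image.mp hyA
    have hexy : ∃ i, f x₀ i = y := ⟨i, hif⟩
    have hyt : y ∈ t := hy
    have hpU : pick y ∈ Used := Finset.mem_image_of_mem pick hyt
    have hne' : pick y ≠ i₀ := fun h => hi₀ (h ▸ hpU)
    exact ⟨pick y, by rw [hfx' _ hne', hpick y hexy]⟩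
  have hpK' : p ∈ K x' := convexHull_mono htsub hpt
  have hy'K' : y' ∈ K x' := hfi₀ ▸ hmem x' i₀
  -- a strictly closer point on the segment [p, y']
  have hpy' : ⟪p, y'⟫ ≤ 0 := by rw [real_inner_comm]; exact hy'
  set c : ℝ := ⟪p, y' - p⟫ with hcdef
  have hpp : ⟪p, p⟫ = ‖p‖^2 := real_inner_self_eq_norm_sq p
  have hnp2 : (0:ℝ) < ‖p‖^2 := by
    have : 0 < ‖p‖ := norm_pos_iff.mpr hp0
    positivity
  have hc : c ≤ -‖p‖^2 := by
    rw [hcdef, inner_sub_right]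
    linarith
  have hcneg : c < 0 := lt_of_le_of_lt hc (by linarith)
  set B : ℝ := ‖y' - p‖^2 with hBdef
  have hBpos : 0 < B := by
    have hne' : y' - p ≠ 0 := by
      intro h
      have hyp : y' = p := sub_eq_zero.mp h
      rw [hyp] at hpy'
      linarith
    have : 0 < ‖y' - p‖ := norm_pos_iff.mpr hne'
    positivity
  set θ : ℝ := min 1 (-c / B) with hθdef
  have hθ0 : 0 < θ := lt_min one_pos (div_pos (neg_pos.2 hcneg) hBpos)
  have hθ1 : θ ≤ 1 := min_le_left _ _
  have hθB : θ * B ≤ -c := by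
    have := min_le_right 1 (-c / B)
    calc θ * B ≤ (-c / B) * B := by
          exact mul_le_mul_of_nonneg_right this hBpos.le
      _ = -c := by field_simp
  set q : E := p + θ • (y' - p) with hqdef
  have hqK' : q ∈ K x' := (hKconv x').add_smul_sub_mem hpK' hy'K' ⟨hθ0.le, hθ1⟩
  have hq2 : ‖q‖^2 = ‖p‖^2 + 2*θ*c + θ^2*B := by
    rw [hqdef, norm_add_sq_real, real_inner_smul_right, norm_smul]
    rw [Real.norm_eq_abs, mul_pow, ← hcdef, sq_abs, ← hBdef]
    ring
  have hqlt : ‖q‖^2 < ‖p‖^2 := by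
    have h2 : θ*(θ*B) ≤ θ*(-c) := mul_le_mul_of_nonneg_left hθB hθ0.le
    nlinarith
  have hqn : ‖q‖ < ‖p‖ := by
    have := lt_of_pow_lt_pow_left₀ 2 (norm_nonneg p) hqlt
    exact this
  have hle : ‖np x'‖ ≤ ‖q‖ := by
    have h1 : ‖(0:E) - np x'‖ ≤ ‖(0:E) - q‖ := by
      rw [hnp x']
      exact ciInf_le ⟨0, by rintro r ⟨w, rfl⟩; exact norm_nonneg _⟩ (⟨q, hqK'⟩ : K x')
    simpa using h1
  have := hx₀ x'
  linarith

lemma tv_sum_apply {γ : Type*} {I : Type*} [Fintype I] (s : Finset γ)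
    (f : γ → EuclideanSpace ℝ I) (a : I) : (∑ j ∈ s, f j) a = ∑ j ∈ s, f j a := by
  classical
  induction s using Finset.induction with
  | empty => simp
  | insert _ _ h ih => rw [Finset.sum_insert h, Finset.sum_insert h, ← ih]; rfl

end TverbergAux

section TverbergAux2
open scoped RealInnerProductSpace
open Finset Module

/-- **Tverberg's theorem.** For any integers `k ≥ 1`, `d ≥ 1` and any set of
`(k−1)(d+1)+1` points in `ℝ^d`, there is a partition of the set into `k` nonempty
subsets whose convex hulls have a common point. -/
theorem tverberg_theorem
    (k d : ℕ) (hk : 1 ≤ k) (hd : 1 ≤ d)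
    (P : Finset (EuclideanSpace ℝ (Fin d)))
    (hP : P.card = (k - 1) * (d + 1) + 1) :
    ∃ Pparts : Fin k → Finset (EuclideanSpace ℝ (Fin d)),
      (∀ i, (Pparts i).Nonempty) ∧
      (∀ i i', i ≠ i' → Disjoint (Pparts i) (Pparts i')) ∧
      Finset.univ.biUnion Pparts = P ∧
      ∃ c : EuclideanSpace ℝ (Fin d),
        ∀ i, c ∈ convexHull ℝ (↑(Pparts i) : Set (EuclideanSpace ℝ (Fin d))) := by
  classical
  obtain ⟨K, rfl⟩ : ∃ K, k = K + 1 := ⟨k - 1, (Nat.succ_pred_eq_of_pos hk).symm⟩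
  simp only [Nat.add_sub_cancel] at hP
  let ι := {a : EuclideanSpace ℝ (Fin d) // a ∈ P}
  haveI : Fintype ι := FinsetCoe.fintype P
  have hcardι : Fintype.card ι = K * (d + 1) + 1 := by rw [Fintype.card_coe, hP]
  have hfr : Module.finrank ℝ (EuclideanSpace ℝ (Fin (d+1) × Fin K)) = (d+1) * K := by
    simp [finrank_euclideanSpace]
  set b : EuclideanSpace ℝ (Fin d) → Fin (d+1) → ℝ :=
    fun a s => if h : (s : ℕ) < d then a ⟨(s : ℕ), h⟩ else 1 with hbdef
  set v : Fin (K+1) → Fin K → ℝ :=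
    fun j t => (if (j:ℕ) = (t:ℕ) then 1 else 0) - (if (j:ℕ) = K then 1 else 0) with hvdef
  have hv1 : ∀ (t : Fin K) (α : Fin (K+1) → ℝ),
      ∑ j, α j * v j t = α (Fin.castSucc t) - α (Fin.last K) := by
    intro t α
    have e1 : ∀ j : Fin (K+1), ((j:ℕ) = (t:ℕ)) = (j = Fin.castSucc t) := by
      intro j
      apply propext
      constructor
      · intro h; apply Fin.ext; simpa using h
      · intro h; subst h; simp
    have e2 : ∀ j : Fin (K+1), ((j:ℕ) = K) = (j = Fin.last K) := by
      intro j
      apply propext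
      constructor
      · intro h; apply Fin.ext; simpa using h
      · intro h; subst h; simp
    simp only [hvdef, mul_sub, mul_ite, mul_one, mul_zero, Finset.sum_sub_distrib, e1, e2,
      Finset.sum_ite_eq' Finset.univ, Finset.mem_univ, if_true]
  have hvsum : ∀ t : Fin K, ∑ j, v j t = 0 := by
    intro t
    have := hv1 t (fun _ => 1)
    simpa using this
  set T : ι → Fin (K+1) → EuclideanSpace ℝ (Fin (d+1) × Fin K) :=
    fun i j => WithLp.toLp 2 (fun st : Fin (d+1) × Fin K => b (i : EuclideanSpace ℝ (Fin d)) st.1 * v j st.2) with hTdef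
  set S : ι → Finset (EuclideanSpace ℝ (Fin (d+1) × Fin K)) :=
    fun i => Finset.image (T i) Finset.univ with hSdef
  have hS : ∀ i, (0 : EuclideanSpace ℝ (Fin (d+1) × Fin K)) ∈ convexHull ℝ ((S i : Set _)) := by
    intro i
    have hTsum : ∑ j, T i j = (0 : EuclideanSpace ℝ (Fin (d+1) × Fin K)) := by
      ext st
      rw [tv_sum_apply Finset.univ (T i) st]
      show ∑ j, b (i : EuclideanSpace ℝ (Fin d)) st.1 * v j st.2 = 0
      rw [← Finset.mul_sum, hvsum st.2, mul_zero]
    have hcm : Finset.univ.centerMass (fun _ : Fin (K+1) => (1:ℝ)) (T i) = 0 := by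
      rw [Finset.centerMass]
      simp [hTsum]
    rw [← hcm]
    refine Finset.centerMass_mem_convexHull _ (fun j _ => zero_le_one) ?_ (fun j _ => ?_)
    · simp
      positivity
    · exact Finset.mem_coe.2 (Finset.mem_image_of_mem _ (Finset.mem_univ j))
  have hcard : Module.finrank ℝ (EuclideanSpace ℝ (Fin (d+1) × Fin K)) < Fintype.card ι := by
    rw [hfr, hcardι, Nat.mul_comm]
    omega
  obtain ⟨x, hxS, hx0⟩ := tv_colorful_caratheodory hcard S hS
  have hcolor : ∀ i, ∃ j, T i j = x i := by
    intro i
    obtain ⟨j, _, hj⟩ := Finset.mem_image.mp (hxS i)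
    exact ⟨j, hj⟩
  choose c hc using hcolor
  rw [convexHull_range_eq_exists_affineCombination] at hx0
  obtain ⟨s, w, hw0, hw1, haff⟩ := hx0
  have hlin : ∑ i ∈ s, w i • x i = 0 := by
    rw [← Finset.affineCombination_eq_linear_combination s x w hw1]
    exact haff
  set μ : ι → ℝ := fun i => if i ∈ s then w i else 0 with hμdef
  have hμ0 : ∀ i, 0 ≤ μ i := by
    intro i
    by_cases h : i ∈ s <;> simp [hμdef, h, hw0 i]
  have hμ1 : ∑ i, μ i = 1 := by
    rw [hμdef]
    rw [Finset.sum_ite_mem, Finset.univ_inter, hw1]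
  have hμlin : ∑ i, μ i • x i = (0 : EuclideanSpace ℝ (Fin (d+1) × Fin K)) := by
    have he : ∀ i, μ i • x i = if i ∈ s then w i • x i else 0 := by
      intro i
      by_cases h : i ∈ s <;> simp [hμdef, h]
    rw [Finset.sum_congr rfl (fun i _ => he i), Finset.sum_ite_mem, Finset.univ_inter, hlin]
  have hcoord : ∀ (s' : Fin (d+1)) (t : Fin K),
      ∑ i, μ i * (b (i : EuclideanSpace ℝ (Fin d)) s' * v (c i) t) = 0 := by
    intro s' t
    have h1 := congrArg (fun z : EuclideanSpace ℝ (Fin (d+1) × Fin K) => z (s', t)) hμlin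
    simp only [] at h1
    rw [tv_sum_apply Finset.univ (fun i => μ i • x i) (s', t)] at h1
    calc ∑ i, μ i * (b (i : EuclideanSpace ℝ (Fin d)) s' * v (c i) t)
        = ∑ i, (μ i • x i) (s', t) := by
          refine Finset.sum_congr rfl (fun i _ => ?_)
          rw [← hc i]
          rfl
      _ = 0 := h1
  set q : Fin (K+1) → Fin (d+1) → ℝ :=
    fun j s' => ∑ i ∈ Finset.univ.filter (fun i => c i = j),
      μ i * b (i : EuclideanSpace ℝ (Fin d)) s' with hqdef
  have hgroup : ∀ (s' : Fin (d+1)) (t : Fin K), ∑ j, q j s' * v j t = 0 := by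
    intro s' t
    rw [← hcoord s' t,
      ← Finset.sum_fiberwise Finset.univ c
        (fun i => μ i * (b (i : EuclideanSpace ℝ (Fin d)) s' * v (c i) t))]
    refine Finset.sum_congr rfl (fun j _ => ?_)
    rw [hqdef, Finset.sum_mul]
    refine Finset.sum_congr rfl (fun i hi => ?_)
    have hcij : c i = j := (Finset.mem_filter.mp hi).2
    rw [hcij]
    ring
  have hqeq : ∀ j s', q j s' = q (Fin.last K) s' := by
    intro j s'
    have hall : ∀ t : Fin K, q (Fin.castSucc t) s' = q (Fin.last K) s' := by
      intro t
      have h := hgroup s' t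
      rw [hv1 t (fun j => q j s')] at h
      linarith
    by_cases hjK : (j:ℕ) = K
    · have : j = Fin.last K := Fin.ext (by simpa using hjK)
      rw [this]
    · have hlt : (j:ℕ) < K := lt_of_le_of_ne (Nat.lt_succ_iff.mp j.isLt) hjK
      have : j = Fin.castSucc ⟨(j:ℕ), hlt⟩ := Fin.ext (by simp)
      rw [this]
      exact hall _
  have hblast : ∀ a : EuclideanSpace ℝ (Fin d), b a (Fin.last d) = 1 := by
    intro a
    rw [hbdef]
    simp
  have hWq : ∀ j, ∑ i ∈ Finset.univ.filter (fun i => c i = j), μ i = q j (Fin.last d) := by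
    intro j
    rw [hqdef]
    refine Finset.sum_congr rfl (fun i _ => ?_)
    rw [hblast, mul_one]
  have hWsum : ∑ j, q j (Fin.last d) = 1 := by
    rw [← hμ1, ← Finset.sum_fiberwise Finset.univ c μ]
    exact Finset.sum_congr rfl (fun j _ => (hWq j).symm)
  have hWlast : q (Fin.last K) (Fin.last d) = 1 / (K+1) := by
    have h2 : ∑ j : Fin (K+1), q j (Fin.last d) = (K+1) * q (Fin.last K) (Fin.last d) := by
      rw [Finset.sum_congr rfl (fun j _ => hqeq j (Fin.last d))]
      simp [Finset.sum_const, Finset.card_univ, nsmul_eq_mul]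
    rw [hWsum] at h2
    have hK1 : (0:ℝ) < K + 1 := by positivity
    field_simp
    linarith
  have hWpos : ∀ j, 0 < q j (Fin.last d) := by
    intro j
    rw [hqeq j, hWlast]
    positivity
  set Pparts : Fin (K+1) → Finset (EuclideanSpace ℝ (Fin d)) :=
    fun j => (Finset.univ.filter (fun i : ι => c i = j)).image Subtype.val with hPdef
  have hfilne : ∀ j, (Finset.univ.filter (fun i : ι => c i = j)).Nonempty := by
    intro j
    by_contra h
    rw [Finset.not_nonempty_iff_eq_empty] at h
    have h0 : q j (Fin.last d) = 0 := by rw [← hWq j, h, Finset.sum_empty]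
    have := hWpos j
    rw [h0] at this
    exact lt_irrefl 0 this
  refine ⟨Pparts, ?_, ?_, ?_, ?_⟩
  · intro j
    obtain ⟨i, hi⟩ := hfilne j
    exact ⟨(i : EuclideanSpace ℝ (Fin d)), Finset.mem_image_of_mem _ hi⟩
  · intro j j' hne
    rw [Finset.disjoint_left]
    rintro a ha ha'
    obtain ⟨i, hi, rfl⟩ := Finset.mem_image.mp ha
    obtain ⟨i', hi', he⟩ := Finset.mem_image.mp ha'
    have hii : i' = i := Subtype.ext he
    rw [hii] at hi'
    exact hne (by rw [← (Finset.mem_filter.mp hi).2, ← (Finset.mem_filter.mp hi').2])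
  · ext a
    simp only [Finset.mem_biUnion, Finset.mem_univ, true_and]
    constructor
    · rintro ⟨j, hj⟩
      obtain ⟨i, _, rfl⟩ := Finset.mem_image.mp hj
      exact i.2
    · intro ha
      refine ⟨c ⟨a, ha⟩, Finset.mem_image.mpr ⟨⟨a, ha⟩, ?_, rfl⟩⟩
      simp [Finset.mem_filter]
  · set MM : Fin (K+1) → EuclideanSpace ℝ (Fin d) := fun j =>
      (Finset.univ.filter (fun i : ι => c i = j)).centerMass μ
        (fun i => (i : EuclideanSpace ℝ (Fin d))) with hMdef
    have hMmem : ∀ j, MM j ∈ convexHull ℝ ((Pparts j : Set (EuclideanSpace ℝ (Fin d)))) := by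
      intro j
      refine Finset.centerMass_mem_convexHull _ (fun i _ => hμ0 i) ?_ (fun i hi => ?_)
      · rw [hWq j]
        exact hWpos j
      · exact Finset.mem_coe.2 (Finset.mem_image_of_mem _ hi)
    have hMeq : ∀ j, MM j = MM (Fin.last K) := by
      intro j
      have hWj : ∑ i ∈ Finset.univ.filter (fun i : ι => c i = j), μ i
          = ∑ i ∈ Finset.univ.filter (fun i : ι => c i = Fin.last K), μ i := by
        rw [hWq j, hWq (Fin.last K), hqeq j]
      have hsum_eq :
          ∑ i ∈ Finset.univ.filter (fun i : ι => c i = j),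
              μ i • (i : EuclideanSpace ℝ (Fin d))
            = ∑ i ∈ Finset.univ.filter (fun i : ι => c i = Fin.last K),
              μ i • (i : EuclideanSpace ℝ (Fin d)) := by
        ext s'
        rw [tv_sum_apply, tv_sum_apply]
        have hb : ∀ (a : EuclideanSpace ℝ (Fin d)), b a (Fin.castSucc s') = a s' := by
          intro a
          rw [hbdef]
          simp only [Fin.coe_castSucc]
          rw [dif_pos s'.isLt]
        have key : ∀ j'' : Fin (K+1),
            ∑ i ∈ Finset.univ.filter (fun i : ι => c i = j''),
                (μ i • (i : EuclideanSpace ℝ (Fin d))) s'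
              = q j'' (Fin.castSucc s') := by
          intro j''
          rw [hqdef]
          refine Finset.sum_congr rfl (fun i _ => ?_)
          rw [hb (i : EuclideanSpace ℝ (Fin d))]
          rfl
        rw [key j, key (Fin.last K), hqeq j]
      rw [hMdef]
      simp only [Finset.centerMass]
      rw [hWj, hsum_eq]
    exact ⟨MM (Fin.last K), fun j => (hMeq j) ▸ hMmem j⟩

end TverbergAux2
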